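/- For every ε > 0 and every s ≥ 0, one has s · g_ε(s) ≤ ε² · e^{-1}, where g_ε(s) = ε·log(1 + exp(-s/ε)). -/

import Mathlib

theorem mul_softplus_le (ε : ℝ) (hε : 0 < ε) (s : ℝ) (hs : 0 ≤ s) :
    s * (ε * Real.log (1 + Real.exp (-s / ε))) ≤ ε ^ 2 * Real.exp (-1) := by
  set t := s / ε with ht_def
  have ht : 0 ≤ t := div_nonneg hs hε.le
  have hst : s = ε * t := by rw [ht_def]; field_simp
  have hlog : Real.log (1 + Real.exp (-t)) ≤ Real.exp (-t) := by
    have := Real.log_le_sub_one_of_pos (x := 1 + Real.exp (-t))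
      (by positivity)
    linarith
  have hkey : t * Real.exp (-t) ≤ Real.exp (-1) := by
    have h1 : t ≤ Real.exp (t - 1) := by
      have := Real.add_one_le_exp (t - 1)
      linarith
    calc t * Real.exp (-t) ≤ Real.exp (t - 1) * Real.exp (-t) :=
          mul_le_mul_of_nonneg_right h1 (Real.exp_nonneg _)
      _ = Real.exp (-1) := by rw [← Real.exp_add]; ring_nf
  rw [neg_div]
  calc s * (ε * Real.log (1 + Real.exp (-t)))
      ≤ s * (ε * Real.exp (-t)) := by
        apply mul_le_mul_of_nonneg_left _ hs
        exact mul_le_mul_of_nonneg_left hlog hε.le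
    _ = ε ^ 2 * (t * Real.exp (-t)) := by rw [hst]; ring
    _ ≤ ε ^ 2 * Real.exp (-1) := by
        apply mul_le_mul_of_nonneg_left hkey (by positivity)
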